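/- For $i \in I$ and $s \geq 1$, define elements $P_{i,s}$ of $U(\mathfrak{h}[t])$ recursively by $P_{i,0} = 1$ and $P_{i,s} = -\frac{1}{s}\sum_{r=1}^s (h_i \otimes t^r) P_{i,s-r}$. Let $\mathbf{pr} : U(\mathfrak{g}[t]) \to U(\mathfrak{h}[t])$ be the projection corresponding to the decomposition $U(\mathfrak{g}[t]) = U(\mathfrak{h}[t]) \oplus (\mathfrak{n}^-[t]U(\mathfrak{g}[t]) + U(\mathfrak{g}[t])\mathfrak{n}^+[t])$. Then (Garland's identity) $\mathbf{pr}((x_i^+ \otimes t)^s (x_i^- \otimes 1)^s) = (-1)^s (s!)^2 P_{i,s}$. -/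

import Mathlib

/-!
STATEMENT 5 (Garland's identity):  In `U(𝔤[t])`, with `P_{i,0} = 1`,
`P_{i,s} = -(1/s) ∑_{r=1}^s (h_i ⊗ t^r) P_{i,s-r}`, and `pr` the projection onto
`U(𝔥[t])` along `𝔫⁻[t]U(𝔤[t]) + U(𝔤[t])𝔫⁺[t]`, one has
`pr((x_i⁺ ⊗ t)^s (x_i⁻)^s) = (-1)^s (s!)² P_{i,s}`.
-/

open scoped TensorProduct
open Polynomial

noncomputable section

variable (𝔤 : Type) [LieRing 𝔤] [LieAlgebra ℂ 𝔤]

/-- The current algebra `𝔤[t] = 𝔤 ⊗ ℂ[t]`. -/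
abbrev CurrentAlgebra := ℂ[X] ⊗[ℂ] 𝔤

instance : LieAlgebra ℂ (CurrentAlgebra 𝔤) where
  lie_smul c x y := by
    have h1 : c • y = (algebraMap ℂ ℂ[X] c) • y := (algebraMap_smul ℂ[X] c y).symm
    have h2 : c • ⁅x, y⁆ = (algebraMap ℂ ℂ[X] c) • ⁅x, y⁆ :=
      (algebraMap_smul ℂ[X] c ⁅x, y⁆).symm
    rw [h1, h2]
    exact LieAlgebra.lie_smul _ _ _

/-- `U(𝔤[t])`, the universal enveloping algebra of the current algebra. -/
abbrev UCA := UniversalEnvelopingAlgebra ℂ (CurrentAlgebra 𝔤)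

attribute [local instance 100] LieRing.ofAssociativeRing LieAlgebra.ofAssociativeAlgebra

/-- The canonical embedding `𝔤[t] → U(𝔤[t])`. -/
def iotaCA : CurrentAlgebra 𝔤 →ₗ⁅ℂ⁆ UCA 𝔤 := UniversalEnvelopingAlgebra.ι ℂ

/-- Garland's elements:  `P 0 = 1`, `P s = -(1/s) ∑_{r=1}^s H r * P (s - r)`,
where `H r` stands for `h_i ⊗ t^r`. -/
def garlandP {A : Type} [Ring A] [Algebra ℂ A] (H : ℕ → A) : ℕ → A
  | 0 => 1
  | (s + 1) => (-((s : ℂ) + 1)⁻¹) •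
      ∑ r ∈ Finset.range (s + 1), H (r + 1) * garlandP H (s - r)
  termination_by s => s
  decreasing_by exact Nat.lt_succ_of_le (Nat.sub_le s r)

variable (𝔥 np nm : LieSubalgebra ℂ 𝔤)

/-- `U(𝔥[t])` inside `U(𝔤[t])`, the subalgebra generated by `𝔥 ⊗ ℂ[t]`. -/
def Uh : Subalgebra ℂ (UCA 𝔤) :=
  Algebra.adjoin ℂ (Set.range fun p : ℂ[X] × ↥𝔥 => iotaCA 𝔤 (p.1 ⊗ₜ (p.2 : 𝔤)))

/-- The left ideal `𝔫⁻[t] U(𝔤[t])`. -/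
def NmU : Submodule ℂ (UCA 𝔤) :=
  Submodule.span ℂ {z | ∃ (g : ℂ[X]) (x : ↥nm) (u : UCA 𝔤),
    z = iotaCA 𝔤 (g ⊗ₜ (x : 𝔤)) * u}

/-- The right ideal `U(𝔤[t]) 𝔫⁺[t]`. -/
def NpU : Submodule ℂ (UCA 𝔤) :=
  Submodule.span ℂ {z | ∃ (g : ℂ[X]) (x : ↥np) (u : UCA 𝔤),
    z = u * iotaCA 𝔤 (g ⊗ₜ (x : 𝔤))}

section basic
variable {𝔤 : Type} [LieRing 𝔤] [LieAlgebra ℂ 𝔤]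

/-- `x ⊗ tᵃ` as an element of `U(𝔤[t])`. -/
def elt (x : 𝔤) (a : ℕ) : UCA 𝔤 := iotaCA 𝔤 (((X : ℂ[X]) ^ a) ⊗ₜ x)

lemma commP (p q : ℂ[X]) (x y : 𝔤) :
    iotaCA 𝔤 (p ⊗ₜ x) * iotaCA 𝔤 (q ⊗ₜ y) =
      iotaCA 𝔤 (q ⊗ₜ y) * iotaCA 𝔤 (p ⊗ₜ x) + iotaCA 𝔤 ((p * q) ⊗ₜ ⁅x, y⁆) := by
  have := (iotaCA 𝔤).map_lie (p ⊗ₜ x) (q ⊗ₜ y)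
  rw [LieAlgebra.ExtendScalars.bracket_tmul] at this
  rw [this, Ring.lie_def]
  abel

lemma elt_comm (x y : 𝔤) (a b : ℕ) :
    elt x a * elt y b = elt y b * elt x a + elt ⁅x, y⁆ (a + b) := by
  rw [elt, elt, commP, ← pow_add]
  rfl
end basic
section basic2
variable {𝔤 : Type} [LieRing 𝔤] [LieAlgebra ℂ 𝔤]

lemma elt_smul (c : ℂ) (x : 𝔤) (a : ℕ) : elt (c • x) a = c • elt x a := by
  rw [elt, elt, TensorProduct.tmul_smul, map_smul]

lemma elt_zero (a : ℕ) : elt (0 : 𝔤) a = 0 := by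
  rw [elt, TensorProduct.tmul_zero, map_zero]

variable {e f h : 𝔤}
variable (rel1 : ⁅h, e⁆ = (2 : ℂ) • e) (rel2 : ⁅h, f⁆ = (-2 : ℂ) • f)
  (rel3 : ⁅e, f⁆ = h)

section
include rel3
lemma comm_ef (a b : ℕ) :
    elt e a * elt f b = elt f b * elt e a + elt h (a + b) := by
  rw [elt_comm, rel3]
end

section
include rel1
lemma comm_he (a b : ℕ) :
    elt h a * elt e b = elt e b * elt h a + (2 : ℂ) • elt e (a + b) := by
  rw [elt_comm, rel1, elt_smul]

lemma comm_eh (a b : ℕ) :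
    elt e b * elt h a = elt h a * elt e b - (2 : ℂ) • elt e (a + b) := by
  rw [comm_he rel1]; abel
end

section
include rel2
lemma comm_hf (a b : ℕ) :
    elt h a * elt f b = elt f b * elt h a - (2 : ℂ) • elt f (a + b) := by
  rw [elt_comm, rel2, elt_smul, neg_smul]; abel
end

lemma comm_ff (a b : ℕ) : elt f a * elt f b = elt f b * elt f a := by
  have := elt_comm (𝔤 := 𝔤) f f a b
  rwa [lie_self, elt_zero, add_zero] at this

lemma comm_ee (a b : ℕ) : elt e a * elt e b = elt e b * elt e a := by
  have := elt_comm (𝔤 := 𝔤) e e a b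
  rwa [lie_self, elt_zero, add_zero] at this

lemma comm_hh (a b : ℕ) : elt h a * elt h b = elt h b * elt h a := by
  have := elt_comm (𝔤 := 𝔤) h h a b
  rwa [lie_self, elt_zero, add_zero] at this

end basic2
section powers
variable {𝔤 : Type} [LieRing 𝔤] [LieAlgebra ℂ 𝔤]
variable {e f h : 𝔤}
variable (rel1 : ⁅h, e⁆ = (2 : ℂ) • e) (rel2 : ⁅h, f⁆ = (-2 : ℂ) • f)
  (rel3 : ⁅e, f⁆ = h)

section
include rel2
/-- `h_m F^{b+1} = F^{b+1} h_m - 2(b+1) F^b f_m`. -/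
lemma L2 (m b : ℕ) :
    elt h m * (elt f 0) ^ (b + 1) =
      (elt f 0) ^ (b + 1) * elt h m
        - (2 * ((b : ℂ) + 1)) • ((elt f 0) ^ b * elt f m) := by
  induction b with
  | zero =>
    simpa using comm_hf rel2 m 0
  | succ b ih =>
    rw [pow_succ, ← mul_assoc, ih, sub_mul, smul_mul_assoc,
      mul_assoc ((elt f 0) ^ (b + 1)), comm_hf rel2 m 0,
      mul_assoc ((elt f 0) ^ b), comm_ff (f := f) m 0,
      mul_sub, mul_smul_comm, ← mul_assoc, ← pow_succ,
      ← mul_assoc, ← pow_succ]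
    simp only [Nat.add_zero]
    push_cast
    module
end
end powers
section powers2
variable {𝔤 : Type} [LieRing 𝔤] [LieAlgebra ℂ 𝔤]
variable {e f h : 𝔤}
variable (rel1 : ⁅h, e⁆ = (2 : ℂ) • e) (rel2 : ⁅h, f⁆ = (-2 : ℂ) • f)
  (rel3 : ⁅e, f⁆ = h)

section
include rel2 rel3
/-- `e_m F^{b+1} = F^{b+1} e_m + (b+1) F^b h_m - (b+1)b F^{b-1} f_m`. -/
lemma L1 (m b : ℕ) :
    elt e m * (elt f 0) ^ (b + 1) =
      (elt f 0) ^ (b + 1) * elt e m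
        + (((b : ℂ) + 1)) • ((elt f 0) ^ b * elt h m)
        - ((((b : ℂ) + 1)) * b) • ((elt f 0) ^ (b - 1) * elt f m) := by
  induction b with
  | zero =>
    simpa using comm_ef rel3 m 0
  | succ b ih =>
    cases b with
    | zero =>
      rw [pow_succ, ← mul_assoc, ih]
      simp only [Nat.cast_zero, Nat.cast_one, pow_zero, pow_one, zero_add, one_smul,
        zero_mul, mul_zero, zero_smul, sub_zero, one_mul, add_mul, Nat.add_sub_cancel, Nat.succ_sub_one]
      rw [mul_assoc, comm_ef rel3 m 0, comm_hf rel2 m 0]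
      simp only [Nat.add_zero, mul_add]
      rw [← mul_assoc, ← pow_two]
      push_cast
      module
    | succ k =>
      simp only [Nat.succ_sub_one] at ih ⊢
      rw [pow_succ (n := k + 1 + 1), ← mul_assoc, ih]
      simp only [add_mul, sub_mul, smul_mul_assoc, mul_assoc]
      rw [comm_ef rel3 m 0, comm_hf rel2 m 0, comm_ff (f := f) m 0]
      simp only [mul_add, mul_sub, mul_smul_comm, Nat.add_zero]
      simp only [← mul_assoc]
      simp only [← pow_succ]
      push_cast
      module
end
end powers2
section powers3
variable {𝔤 : Type} [LieRing 𝔤] [LieAlgebra ℂ 𝔤]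
variable {e f h : 𝔤}
variable (rel1 : ⁅h, e⁆ = (2 : ℂ) • e) (rel2 : ⁅h, f⁆ = (-2 : ℂ) • f)
  (rel3 : ⁅e, f⁆ = h)

section
include rel3
lemma step_ef (m : ℕ) :
    elt e 1 * elt f m = elt f m * elt e 1 + elt h (m + 1) := by
  have := comm_ef rel3 (e := e) 1 m
  rwa [Nat.add_comm 1 m] at this
end

section
include rel1
lemma step_eh (m : ℕ) :
    elt e 1 * elt h (m + 1) = elt h (m + 1) * elt e 1 - (2 : ℂ) • elt e (m + 2) := by
  rw [comm_he rel1 (m + 1) 1]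
  abel
end

section
include rel1 rel3
/-- `E^{a+1} f_m = f_m E^{a+1} + (a+1) h_{m+1} E^a - (a+1)a e_{m+2} E^{a-1}`. -/
lemma L3 (m a : ℕ) :
    (elt e 1) ^ (a + 1) * elt f m =
      elt f m * (elt e 1) ^ (a + 1)
        + (((a : ℂ) + 1)) • (elt h (m + 1) * (elt e 1) ^ a)
        - ((((a : ℂ) + 1)) * a) • (elt e (m + 2) * (elt e 1) ^ (a - 1)) := by
  induction a with
  | zero =>
    simpa using step_ef rel3 m
  | succ a ih =>
    cases a with
    | zero =>
      rw [pow_succ', mul_assoc, ih]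
      simp only [Nat.cast_zero, Nat.cast_one, pow_zero, pow_one, zero_add, one_smul,
        zero_mul, mul_zero, zero_smul, sub_zero, one_mul, mul_add,
        Nat.add_sub_cancel, Nat.succ_sub_one]
      rw [← mul_assoc, step_ef rel3 m, ← mul_assoc, step_eh rel1 m]
      simp only [add_mul, sub_mul, smul_mul_assoc]
      rw [mul_assoc (elt f m), ← pow_two]
      norm_num
      module
    | succ k =>
      simp only [Nat.succ_sub_one] at ih ⊢
      rw [pow_succ' (n := k + 1 + 1), mul_assoc, ih]
      simp only [mul_add, mul_sub, mul_smul_comm, ← mul_assoc]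
      rw [step_ef rel3 m, step_eh rel1 m, comm_ee (e := e) 1 (m + 2)]
      simp only [add_mul, sub_mul, smul_mul_assoc, mul_assoc]
      simp only [← pow_succ']
      push_cast
      module
end
end powers3
section ideals
variable {𝔤 : Type} [LieRing 𝔤] [LieAlgebra ℂ 𝔤]

/-- span of `f[t] ⬝ U` for a single element `f`. -/
def Jm (f : 𝔤) : Submodule ℂ (UCA 𝔤) :=
  Submodule.span ℂ {z | ∃ (p : ℂ[X]) (u : UCA 𝔤), z = iotaCA 𝔤 (p ⊗ₜ f) * u}

/-- span of `U ⬝ e[t]` for a single element `e`. -/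
def Jp (e : 𝔤) : Submodule ℂ (UCA 𝔤) :=
  Submodule.span ℂ {z | ∃ (p : ℂ[X]) (u : UCA 𝔤), z = u * iotaCA 𝔤 (p ⊗ₜ e)}

variable {e f h : 𝔤}

lemma Jm_gen (p : ℂ[X]) (u : UCA 𝔤) : iotaCA 𝔤 (p ⊗ₜ f) * u ∈ Jm f :=
  Submodule.subset_span ⟨p, u, rfl⟩

lemma Jp_gen (p : ℂ[X]) (u : UCA 𝔤) : u * iotaCA 𝔤 (p ⊗ₜ e) ∈ Jp e :=
  Submodule.subset_span ⟨p, u, rfl⟩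

lemma elt_Jm_gen (a : ℕ) (u : UCA 𝔤) : elt f a * u ∈ Jm f := Jm_gen _ _
lemma elt_Jp_gen (a : ℕ) (u : UCA 𝔤) : u * elt e a ∈ Jp e := Jp_gen _ _

lemma Jm_mul_right {x : UCA 𝔤} (v : UCA 𝔤) (hx : x ∈ Jm f) : x * v ∈ Jm f := by
  induction hx using Submodule.span_induction with
  | mem z hz => obtain ⟨p, u, rfl⟩ := hz; rw [mul_assoc]; exact Jm_gen p (u * v)
  | zero => simpa using (Jm f).zero_mem
  | add a b _ _ ha hb => rw [add_mul]; exact add_mem ha hb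
  | smul c a _ ha => rw [smul_mul_assoc]; exact Submodule.smul_mem _ c ha

lemma Jp_mul_left {x : UCA 𝔤} (v : UCA 𝔤) (hx : x ∈ Jp e) : v * x ∈ Jp e := by
  induction hx using Submodule.span_induction with
  | mem z hz => obtain ⟨p, u, rfl⟩ := hz; rw [← mul_assoc]; exact Jp_gen p (v * u)
  | zero => simpa using (Jp e).zero_mem
  | add a b _ _ ha hb => rw [mul_add]; exact add_mem ha hb
  | smul c a _ ha => rw [mul_smul_comm]; exact Submodule.smul_mem _ c ha

variable (rel1 : ⁅h, e⁆ = (2 : ℂ) • e) (rel2 : ⁅h, f⁆ = (-2 : ℂ) • f)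

section
include rel2
lemma Jm_h_left {x : UCA 𝔤} (m : ℕ) (hx : x ∈ Jm f) : elt h m * x ∈ Jm f := by
  induction hx using Submodule.span_induction with
  | mem z hz =>
    obtain ⟨p, u, rfl⟩ := hz
    rw [← mul_assoc, elt, commP, rel2, TensorProduct.tmul_smul, map_smul]
    rw [add_mul, smul_mul_assoc, mul_assoc]
    exact add_mem (Jm_gen p _) (Submodule.smul_mem _ _ (Jm_gen _ u))
  | zero => simpa using (Jm f).zero_mem
  | add a b _ _ ha hb => rw [mul_add]; exact add_mem ha hb
  | smul c a _ ha => rw [mul_smul_comm]; exact Submodule.smul_mem _ c ha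
end

section
include rel1
lemma Jp_h_right {x : UCA 𝔤} (m : ℕ) (hx : x ∈ Jp e) : x * elt h m ∈ Jp e := by
  induction hx using Submodule.span_induction with
  | mem z hz =>
    obtain ⟨p, u, rfl⟩ := hz
    have : ⁅e, h⁆ = (-2 : ℂ) • e := by
      rw [← lie_skew, rel1]; module
    rw [mul_assoc, elt, commP, this, TensorProduct.tmul_smul, map_smul]
    rw [mul_add, mul_smul_comm, ← mul_assoc]
    exact add_mem (Jp_gen p _) (Submodule.smul_mem _ _ (Jp_gen _ u))
  | zero => simpa using (Jp e).zero_mem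
  | add a b _ _ ha hb => rw [add_mul]; exact add_mem ha hb
  | smul c a _ ha => rw [smul_mul_assoc]; exact Submodule.smul_mem _ c ha
end

section
include rel1 rel2
lemma J_h_left {x : UCA 𝔤} (m : ℕ) (hx : x ∈ Jm f ⊔ Jp e) :
    elt h m * x ∈ Jm f ⊔ Jp e := by
  obtain ⟨a, ha, b, hb, rfl⟩ := Submodule.mem_sup.mp hx
  rw [mul_add]
  exact add_mem (Submodule.mem_sup_left (Jm_h_left rel2 m ha))
    (Submodule.mem_sup_right (Jp_mul_left _ hb))

lemma J_h_right {x : UCA 𝔤} (m : ℕ) (hx : x ∈ Jm f ⊔ Jp e) :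
    x * elt h m ∈ Jm f ⊔ Jp e := by
  obtain ⟨a, ha, b, hb, rfl⟩ := Submodule.mem_sup.mp hx
  rw [add_mul]
  exact add_mem (Submodule.mem_sup_left (Jm_mul_right _ ha))
    (Submodule.mem_sup_right (Jp_h_right rel1 m hb))
end

end ideals
section commlayer

lemma garlandP_zero {A : Type} [Ring A] [Algebra ℂ A] (H : ℕ → A) :
    garlandP H 0 = 1 := by rw [garlandP]

lemma garlandP_succ {A : Type} [Ring A] [Algebra ℂ A] (H : ℕ → A) (s : ℕ) :
    garlandP H (s + 1) = (-((s : ℂ) + 1)⁻¹) •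
      ∑ r ∈ Finset.range (s + 1), H (r + 1) * garlandP H (s - r) := by
  rw [garlandP]

variable {𝔤 : Type} [LieRing 𝔤] [LieAlgebra ℂ 𝔤]
variable {e f h : 𝔤}

/-- `P_n` built from the commuting elements `h ⊗ tʳ`. -/
noncomputable abbrev Pg (h : 𝔤) (n : ℕ) : UCA 𝔤 := garlandP (fun r => elt h r) n

lemma comm_Pg (a : ℕ) : ∀ n : ℕ, Commute (elt h a) (Pg h n) := by
  intro n
  induction n using Nat.strong_induction_on with
  | _ n ih =>
    match n with
    | 0 => rw [Pg, garlandP_zero]; exact Commute.one_right _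
    | (s + 1) =>
      rw [Pg, garlandP_succ]
      refine Commute.smul_right ?_ _
      refine Commute.sum_right _ _ _ fun r _ => ?_
      exact Commute.mul_right (comm_hh a (r+1)) (ih (s - r) (Nat.lt_succ_of_le (Nat.sub_le s r)))

/-- `S n m = ∑_{r=0}^{n} h_{r+1+m} P_{n-r}`. -/
noncomputable def Sg (h : 𝔤) (n m : ℕ) : UCA 𝔤 :=
  ∑ r ∈ Finset.range (n + 1), elt h (r + 1 + m) * Pg h (n - r)

lemma Sg_zero (m : ℕ) : Sg h 0 m = elt h (m + 1) := by
  rw [Sg]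
  have : (0 : ℕ) + 1 + m = m + 1 := by omega
  simp [this, garlandP_zero]

lemma Sg_split (k m : ℕ) :
    Sg h (k + 1) m = elt h (m + 1) * Pg h (k + 1) + Sg h k (m + 1) := by
  rw [Sg, Finset.sum_range_succ', add_comm]
  congr 1
  · simp only [Nat.zero_add, Nat.add_comm 1 m, Nat.sub_zero]
  · rw [Sg]
    refine Finset.sum_congr rfl fun r _ => ?_
    have h1 : r + 1 + 1 + m = r + 1 + (m + 1) := by omega
    have h2 : k + 1 - (r + 1) = k - r := by omega
    rw [h1, h2]

lemma Pg_succ (n : ℕ) : Pg h (n + 1) = (-((n : ℂ) + 1)⁻¹) • Sg h n 0 := by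
  rw [Pg, garlandP_succ, Sg]

end commlayer
section claims
variable {𝔤 : Type} [LieRing 𝔤] [LieAlgebra ℂ 𝔤]
variable {e f h : 𝔤}
variable (rel1 : ⁅h, e⁆ = (2 : ℂ) • e) (rel2 : ⁅h, f⁆ = (-2 : ℂ) • f)
  (rel3 : ⁅e, f⁆ = h)

set_option maxHeartbeats 1600000 in
include rel1 rel2 rel3 in
lemma garland_claims : ∀ n : ℕ,
    ((elt e 1) ^ n * (elt f 0) ^ n
        - ((-1 : ℂ) ^ n * (n.factorial : ℂ) ^ 2) • Pg h n ∈ Jm f ⊔ Jp e)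
    ∧ ∀ m : ℕ, ((elt e 1) ^ (n + 1) * (elt f 0) ^ n * elt f m
        - ((-1 : ℂ) ^ n * ((n + 1).factorial : ℂ) * (n.factorial : ℂ)) • Sg h n m
          ∈ Jm f ⊔ Jp e) := by
  intro n
  induction n using Nat.strong_induction_on with
  | _ n ih =>
  match n with
  | 0 =>
    constructor
    · have : (elt e 1) ^ 0 * (elt f 0) ^ 0
          - ((-1 : ℂ) ^ 0 * ((0 : ℕ).factorial : ℂ) ^ 2) • Pg h 0 = 0 := by
        rw [Pg, garlandP_zero]; norm_num
      rw [this]; exact zero_mem _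
    · intro m
      have key : (elt e 1) ^ (0 + 1) * (elt f 0) ^ 0 * elt f m
          - ((-1 : ℂ) ^ 0 * ((0 + 1).factorial : ℂ) * ((0 : ℕ).factorial : ℂ)) • Sg h 0 m
          = elt f m * elt e 1 := by
        rw [Sg_zero, pow_one, pow_zero, mul_one, step_ef rel3 m]
        norm_num
      rw [key]
      exact Submodule.mem_sup_left (elt_Jm_gen m _)
  | 1 =>
    have q1 : (elt e 1) ^ 1 * (elt f 0) ^ 1
        - ((-1 : ℂ) ^ 1 * ((1 : ℕ).factorial : ℂ) ^ 2) • Pg h 1 ∈ Jm f ⊔ Jp e := by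
      have key : (elt e 1) ^ 1 * (elt f 0) ^ 1
          - ((-1 : ℂ) ^ 1 * ((1 : ℕ).factorial : ℂ) ^ 2) • Pg h 1 = elt f 0 * elt e 1 := by
        rw [pow_one, pow_one, Pg_succ 0, Sg_zero, comm_ef rel3 1 0]
        norm_num
      rw [key]
      exact Submodule.mem_sup_left (elt_Jm_gen 0 _)
    refine ⟨q1, fun m => ?_⟩
    have cf : Commute (elt f 0) (elt f m) := comm_ff 0 m
    have hQ0 : (elt e 1) ^ 0 * (elt f 0) ^ 0
        - ((-1 : ℂ) ^ 0 * ((0 : ℕ).factorial : ℂ) ^ 2) • Pg h 0 ∈ Jm f ⊔ Jp e :=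
      ((ih 0 (by omega)).1)
    have key : (elt e 1) ^ (1 + 1) * (elt f 0) ^ 1 * elt f m
        - ((-1 : ℂ) ^ 1 * ((1 + 1).factorial : ℂ) * ((1 : ℕ).factorial : ℂ)) • Sg h 1 m
        = elt f m * ((elt e 1) ^ (1 + 1) * (elt f 0) ^ 1)
          + (2 : ℂ) • (elt h (m + 1) * ((elt e 1) ^ 1 * (elt f 0) ^ 1)
              - ((-1 : ℂ) ^ 1 * ((1 : ℕ).factorial : ℂ) ^ 2) • (elt h (m + 1) * Pg h 1))
          - (2 : ℂ) • ((elt e 1) ^ 0 * ((elt f 0) ^ 1 * elt e (m + 2)))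
          - (2 : ℂ) • ((elt e 1) ^ 0 * (elt f 0) ^ 0 * elt h (m + 2)
              - ((-1 : ℂ) ^ 0 * ((0 : ℕ).factorial : ℂ) ^ 2) • (Pg h 0 * elt h (m + 2))) := by
      rw [pow_one, mul_assoc, cf.eq, ← mul_assoc, L3 rel1 rel3 m 1]
      rw [Sg_split 0 m, Sg_zero]
      simp only [show (1 - 1 : ℕ) = 0 from rfl, show (m + 1 + 1 : ℕ) = m + 2 from rfl]
      simp only [add_mul, sub_mul, smul_mul_assoc, mul_assoc, pow_one, pow_zero,
        one_mul, mul_one]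
      rw [comm_ef rel3 (m + 2) 0]
      simp only [mul_add, mul_sub, mul_smul_comm, Pg, garlandP_zero, mul_one, one_mul,
        pow_zero, Nat.add_zero, show (0 + 1 : ℕ) = 1 from rfl]
      push_cast
      match_scalars <;> norm_num [Nat.factorial]
    rw [key]
    refine sub_mem (sub_mem (add_mem (Submodule.mem_sup_left (elt_Jm_gen m _))
      (Submodule.smul_mem _ _ ?_)) (Submodule.smul_mem _ _ ?_)) (Submodule.smul_mem _ _ ?_)
    · have := J_h_left rel1 rel2 (m + 1) q1
      rwa [mul_sub, mul_smul_comm] at this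
    · exact Submodule.mem_sup_right (Jp_mul_left _ (elt_Jp_gen (m + 2) _))
    · have := J_h_right rel1 rel2 (m + 2) hQ0
      rwa [sub_mul, smul_mul_assoc] at this
  | (n + 2) =>
    obtain ⟨hQ1, hR1⟩ := ih (n + 1) (by omega)
    obtain ⟨hQ0, hR0⟩ := ih n (by omega)
    have hQ2 : (elt e 1) ^ (n + 2) * (elt f 0) ^ (n + 2)
        - ((-1 : ℂ) ^ (n + 2) * ((n + 2).factorial : ℂ) ^ 2) • Pg h (n + 2)
          ∈ Jm f ⊔ Jp e := by
      have key : (elt e 1) ^ (n + 2) * (elt f 0) ^ (n + 2)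
          - ((-1 : ℂ) ^ (n + 2) * ((n + 2).factorial : ℂ) ^ 2) • Pg h (n + 2)
        = (elt e 1) ^ (n + 1) * ((elt f 0) ^ (n + 2) * elt e 1)
          + ((n : ℂ) + 2) • ((elt e 1) ^ (n + 1) * (elt f 0) ^ (n + 1) * elt h 1
              - ((-1 : ℂ) ^ (n + 1) * ((n + 1).factorial : ℂ) ^ 2) • (Pg h (n + 1) * elt h 1))
          - (((n : ℂ) + 2) * ((n : ℂ) + 1)) •
              ((elt e 1) ^ (n + 1) * (elt f 0) ^ n * elt f 1
              - ((-1 : ℂ) ^ n * ((n + 1).factorial : ℂ) * (n.factorial : ℂ)) • Sg h n 1) := by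
        rw [show ((elt e 1) ^ (n + 2) : UCA 𝔤) = (elt e 1) ^ (n + 1) * elt e 1 from pow_succ _ _,
          mul_assoc, L1 rel2 rel3 1 (n + 1)]
        rw [Pg_succ (n + 1), Sg_split n 0]
        rw [(comm_Pg 1 (n + 1)).eq]
        simp only [mul_add, mul_sub, mul_smul_comm, Nat.succ_sub_one, Nat.zero_add,
          ← mul_assoc]
        simp only [Nat.factorial_succ]
        have hne : (2 : ℂ) + (n : ℂ) ≠ 0 := by
          have h0 : ((n + 2 : ℕ) : ℂ) ≠ 0 := Nat.cast_ne_zero.mpr (by omega)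
          push_cast at h0
          rw [add_comm] at h0
          exact h0
        push_cast
        match_scalars
        all_goals try ring
        all_goals (field_simp; ring1)
      rw [key]
      refine sub_mem (add_mem (Submodule.mem_sup_right
        (Jp_mul_left _ (elt_Jp_gen 1 _))) (Submodule.smul_mem _ _ ?_))
        (Submodule.smul_mem _ _ ?_)
      · have := J_h_right rel1 rel2 1 hQ1
        rwa [sub_mul, smul_mul_assoc] at this
      · exact hR0 1
    refine ⟨hQ2, fun m => ?_⟩
    have cf : Commute (elt f 0) (elt f m) := comm_ff 0 m
    have key : (elt e 1) ^ (n + 2 + 1) * (elt f 0) ^ (n + 2) * elt f m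
        - ((-1 : ℂ) ^ (n + 2) * ((n + 2 + 1).factorial : ℂ) * ((n + 2).factorial : ℂ)) •
            Sg h (n + 2) m
      = elt f m * ((elt e 1) ^ (n + 3) * (elt f 0) ^ (n + 2))
        + ((n : ℂ) + 3) • (elt h (m + 1) * ((elt e 1) ^ (n + 2) * (elt f 0) ^ (n + 2))
            - ((-1 : ℂ) ^ (n + 2) * ((n + 2).factorial : ℂ) ^ 2) •
                (elt h (m + 1) * Pg h (n + 2)))
        - (((n : ℂ) + 3) * ((n : ℂ) + 2)) •
            ((elt e 1) ^ (n + 1) * ((elt f 0) ^ (n + 2) * elt e (m + 2)))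
        - (((n : ℂ) + 3) * ((n : ℂ) + 2) * ((n : ℂ) + 2)) •
            ((elt e 1) ^ (n + 1) * (elt f 0) ^ (n + 1) * elt h (m + 2)
            - ((-1 : ℂ) ^ (n + 1) * ((n + 1).factorial : ℂ) ^ 2) •
                (Pg h (n + 1) * elt h (m + 2)))
        + (((n : ℂ) + 3) * ((n : ℂ) + 2) * ((n : ℂ) + 2) * ((n : ℂ) + 1)) •
            ((elt e 1) ^ (n + 1) * (elt f 0) ^ n * elt f (m + 2)
            - ((-1 : ℂ) ^ n * ((n + 1).factorial : ℂ) * (n.factorial : ℂ)) •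
                Sg h n (m + 2)) := by
      rw [show (n + 2 + 1 : ℕ) = n + 3 from rfl, mul_assoc, (cf.pow_left (n + 2)).eq, ← mul_assoc,
        show ((elt e 1) ^ (n + 3) : UCA 𝔤) = (elt e 1) ^ (n + 2 + 1) from rfl,
        L3 rel1 rel3 m (n + 2)]
      rw [Sg_split (n + 1) m, Sg_split n (m + 1)]
      rw [(comm_Pg (m + 1 + 1) (n + 1)).eq]
      simp only [add_mul, sub_mul, smul_mul_assoc, Nat.succ_sub_one,
        show (n + 2 - 1 : ℕ) = n + 1 from rfl]
      have ce : Commute (elt e (m + 2)) (elt e 1) := comm_ee (m + 2) 1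
      rw [(ce.pow_right (n + 1)).eq,
        mul_assoc ((elt e 1) ^ (n + 1)), L1 rel2 rel3 (m + 2) (n + 1)]
      simp only [mul_add, mul_sub, mul_smul_comm, Nat.succ_sub_one,
        show (m + 1 + 1 : ℕ) = m + 2 from rfl, show (n + 1 + 1 : ℕ) = n + 2 from rfl,
        ← mul_assoc]
      simp only [Nat.factorial_succ]
      push_cast
      match_scalars
      all_goals try ring
      all_goals (field_simp; ring1)
    rw [key]
    refine add_mem (sub_mem (sub_mem (add_mem (Submodule.mem_sup_left (elt_Jm_gen m _))
      (Submodule.smul_mem _ _ ?_)) (Submodule.smul_mem _ _ ?_))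
      (Submodule.smul_mem _ _ ?_)) (Submodule.smul_mem _ _ ?_)
    · have := J_h_left rel1 rel2 (m + 1) hQ2
      rwa [mul_sub, mul_smul_comm] at this
    · exact Submodule.mem_sup_right (Jp_mul_left _ (elt_Jp_gen (m + 2) _))
    · have := J_h_right rel1 rel2 (m + 2) hQ1
      rwa [sub_mul, smul_mul_assoc] at this
    · exact hR0 (m + 2)
end claims
section final
variable {𝔤 : Type} [LieRing 𝔤] [LieAlgebra ℂ 𝔤]
variable {𝔥 np nm : LieSubalgebra ℂ 𝔤} {e f h : 𝔤}

lemma Pg_mem_Uh (hh : h ∈ 𝔥) : ∀ s : ℕ, Pg h s ∈ Uh 𝔤 𝔥 := by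
  intro s
  induction s using Nat.strong_induction_on with
  | _ s ih =>
    match s with
    | 0 =>
      rw [Pg, garlandP_zero]; exact one_mem _
    | (k + 1) =>
      rw [Pg, garlandP_succ]
      refine Subalgebra.smul_mem _ (Subalgebra.sum_mem _ fun r _ => mul_mem ?_
        (ih (k - r) (Nat.lt_succ_of_le (Nat.sub_le k r)))) _
      exact Algebra.subset_adjoin ⟨((X : ℂ[X]) ^ (r + 1), ⟨h, hh⟩), rfl⟩

lemma Jm_le_NmU (hf : f ∈ nm) : Jm f ≤ NmU 𝔤 nm := by
  refine Submodule.span_le.mpr fun z hz => ?_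
  obtain ⟨p, u, rfl⟩ := hz
  exact Submodule.subset_span ⟨p, ⟨f, hf⟩, u, rfl⟩

lemma Jp_le_NpU (he : e ∈ np) : Jp e ≤ NpU 𝔤 np := by
  refine Submodule.span_le.mpr fun z hz => ?_
  obtain ⟨p, u, rfl⟩ := hz
  exact Submodule.subset_span ⟨p, ⟨e, he⟩, u, rfl⟩

end final


theorem garland_identity
    (e f h : 𝔤) (he : e ∈ np) (hf : f ∈ nm) (hh : h ∈ 𝔥)
    (rel1 : ⁅h, e⁆ = (2 : ℂ) • e) (rel2 : ⁅h, f⁆ = (-2 : ℂ) • f)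
    (rel3 : ⁅e, f⁆ = h)
    (pr : UCA 𝔤 →ₗ[ℂ] UCA 𝔤)
    (hpr1 : ∀ u ∈ Uh 𝔤 𝔥, pr u = u)
    (hpr2 : ∀ u ∈ NmU 𝔤 nm ⊔ NpU 𝔤 np, pr u = 0)
    (hpr3 : ∀ u : UCA 𝔤, u - pr u ∈ NmU 𝔤 nm ⊔ NpU 𝔤 np)
    (s : ℕ) :
    pr ((iotaCA 𝔤 ((X : ℂ[X]) ⊗ₜ e)) ^ s * (iotaCA 𝔤 ((1 : ℂ[X]) ⊗ₜ f)) ^ s) =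
      ((-1 : ℂ) ^ s * (s.factorial : ℂ) ^ 2) •
        garlandP (fun r => iotaCA 𝔤 (((X : ℂ[X]) ^ r) ⊗ₜ h)) s := by
  have hE : iotaCA 𝔤 ((X : ℂ[X]) ⊗ₜ e) = elt e 1 := by rw [elt, pow_one]
  have hF : iotaCA 𝔤 ((1 : ℂ[X]) ⊗ₜ f) = elt f 0 := by rw [elt, pow_zero]
  have hP : garlandP (fun r => iotaCA 𝔤 (((X : ℂ[X]) ^ r) ⊗ₜ h)) s = Pg h s := rfl
  rw [hE, hF, hP]
  have hcl := (garland_claims rel1 rel2 rel3 s).1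
  have hmem : elt e 1 ^ s * elt f 0 ^ s
      - ((-1 : ℂ) ^ s * (s.factorial : ℂ) ^ 2) • Pg h s ∈ NmU 𝔤 nm ⊔ NpU 𝔤 np :=
    sup_le_sup (Jm_le_NmU hf) (Jp_le_NpU he) hcl
  have h0 := hpr2 _ hmem
  rw [map_sub, sub_eq_zero, map_smul] at h0
  rw [h0, hpr1 _ (Pg_mem_Uh hh s)]


end
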